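/- Let n ≥ 1, N = {0,1,...,n}, and let 𝔸_n = {e_i − e_j : i, j ∈ N, i ≠ j} ⊆ ℝ^N be the root system A_n. Then 𝔸_n is unimodular: if B ⊆ 𝔸_n is a linearly independent set and t ∈ 𝔸_n lies in the ℝ-linear span of B, then t is an integer linear combination of the vectors of B. -/

import Mathlib

open Finset Pointwise

/-- The `i`-th standard basis vector of `ℝ^N`. -/
noncomputable def std {m : ℕ} (i : Fin m) : Fin m → ℝ := fun k => if k = i then 1 else 0

/-- The 0/1 indicator vector of a subset `S ⊆ N`. -/
noncomputable def indic {m : ℕ} (S : Finset (Fin m)) : Fin m → ℝ := fun k => if k ∈ S then 1 else 0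

/-- The standard inner product on `ℝ^N`. -/
noncomputable def ip {m : ℕ} (a b : Fin m → ℝ) : ℝ := ∑ k, a k * b k

/-- The cut set function of symmetric edge weights `b`: `β(S) = Σ_{i∈S, j∉S} b i j`. -/
noncomputable def cutFun {m : ℕ} (b : Fin m → Fin m → ℝ) (S : Finset (Fin m)) : ℝ :=
  ∑ i ∈ S, ∑ j ∈ Sᶜ, b i j

/-- The base polytope of a set function `β`. -/
def basePoly {m : ℕ} (β : Finset (Fin m) → ℝ) : Set (Fin m → ℝ) :=
  {x | (∀ S : Finset (Fin m), ∑ i ∈ S, x i ≤ β S) ∧ ∑ i, x i = 0}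


def IsRootA {m : ℕ} (v : Fin m → ℝ) : Prop := ∃ i j : Fin m, i ≠ j ∧ v = std i - std j

lemma root_apply {m : ℕ} (i j k : Fin m) :
    (std i - std j) k = (if k = i then (1:ℝ) else 0) - (if k = j then 1 else 0) := rfl

lemma root_apply_fst {m : ℕ} {i j : Fin m} (h : i ≠ j) : (std i - std j) i = 1 := by
  rw [root_apply, if_pos rfl, if_neg h]; ring

lemma root_apply_snd {m : ℕ} {i j : Fin m} (h : i ≠ j) : (std i - std j) j = -1 := by
  rw [root_apply, if_neg h.symm, if_pos rfl]; ring

lemma root_support {m : ℕ} {i j k : Fin m} (h : (std i - std j) k ≠ 0) : k = i ∨ k = j := by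
  by_contra hc
  push_neg at hc
  rw [root_apply, if_neg hc.1, if_neg hc.2] at h
  exact h (by ring)

lemma root_support_finset {m : ℕ} {i j : Fin m} (h : i ≠ j) :
    (Finset.univ.filter (fun k => (std i - std j) k ≠ 0)) = {i, j} := by
  ext k
  simp only [Finset.mem_filter, Finset.mem_univ, true_and, Finset.mem_insert,
    Finset.mem_singleton]
  constructor
  · exact root_support
  · rintro (rfl | rfl)
    · rw [root_apply_fst h]; norm_num
    · rw [root_apply_snd h]; norm_num

lemma nat_contra {a b : ℕ} (hA : 2 * b ≤ 2 * a) (hB : a ≤ b - 1) (hC : 1 ≤ b) : False := by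
  omega

lemma exists_leaf {m : ℕ} (F : Finset (Fin m → ℝ)) (hne : F.Nonempty)
    (hF : ∀ b ∈ F, IsRootA b)
    (hind : LinearIndependent ℝ ((↑) : F → (Fin m → ℝ))) :
    ∃ k : Fin m, ∃ b0 ∈ F, b0 k ≠ 0 ∧ ∀ b ∈ F, b k ≠ 0 → b = b0 := by
  classical
  by_contra hcon
  push_neg at hcon
  -- support vertex set
  obtain ⟨S, hmemS⟩ : ∃ S : Finset (Fin m), ∀ k, k ∈ S ↔ ∃ b ∈ F, b k ≠ 0 :=
    ⟨Finset.univ.filter (fun k => ∃ b ∈ F, b k ≠ 0), by intro k; simp⟩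
  -- each root's endpoints are in S
  have hendpts : ∀ b ∈ F, ∀ k, b k ≠ 0 → k ∈ S := by
    intro b hb k hk; exact (hmemS k).2 ⟨b, hb, hk⟩
  -- total degree: ∑_{k} deg k = 2 |F|
  have hdegsum : ∑ k, (F.filter (fun b => b k ≠ 0)).card = 2 * F.card := by
    have : ∀ k : Fin m, (F.filter (fun b => b k ≠ 0)).card
        = ∑ b ∈ F, if b k ≠ 0 then 1 else 0 := by
      intro k; rw [Finset.card_filter]
    simp_rw [this]
    rw [Finset.sum_comm]
    rw [Finset.sum_congr rfl (fun b hb => ?_), Finset.sum_const, smul_eq_mul, mul_comm]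
    obtain ⟨i, j, hij, rfl⟩ := hF b hb
    have : ∑ k : Fin m, (if (std i - std j) k ≠ 0 then 1 else 0)
        = (Finset.univ.filter (fun k => (std i - std j) k ≠ 0)).card := by
      rw [Finset.card_filter]
    rw [this, root_support_finset hij, Finset.card_insert_of_notMem (by simpa using hij),
      Finset.card_singleton]

  -- S is nonempty
  obtain ⟨b1, hb1⟩ := hne
  obtain ⟨p1, q1, hpq1, hb1eq⟩ := hF b1 hb1
  have hk0 : p1 ∈ S := hendpts b1 hb1 p1 (by rw [hb1eq, root_apply_fst hpq1]; norm_num)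
  -- every vertex in S has degree ≥ 2
  have hdeg2 : ∀ k ∈ S, 2 ≤ (F.filter (fun b => b k ≠ 0)).card := by
    intro k hk
    obtain ⟨b, hb, hbk⟩ := (hmemS k).1 hk
    obtain ⟨b', hb', hb'k, hb'b⟩ := hcon k b hb hbk
    refine Finset.one_lt_card.2 ⟨b, ?_, b', ?_, hb'b.symm⟩ <;>
      simp [Finset.mem_filter, hb, hbk, hb', hb'k]
  -- degree zero outside S
  have hdeg0 : ∀ k ∉ S, (F.filter (fun b => b k ≠ 0)).card = 0 := by
    intro k hk
    rw [Finset.card_eq_zero, Finset.filter_eq_empty_iff]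
    intro b hb
    by_contra hbk
    exact hk ((hmemS k).2 ⟨b, hb, hbk⟩)
  -- hence 2|S| ≤ 2|F|
  have hcount : 2 * S.card ≤ 2 * F.card := by
    rw [← hdegsum, ← Finset.sum_subset (Finset.subset_univ S) (fun k _ hk => hdeg0 k hk)]
    calc 2 * S.card = ∑ _k ∈ S, 2 := by rw [Finset.sum_const, smul_eq_mul, mul_comm]
    _ ≤ ∑ k ∈ S, (F.filter (fun b => b k ≠ 0)).card := Finset.sum_le_sum hdeg2
  -- dimension bound : |F| ≤ |S| - 1
  obtain ⟨G, hGdef⟩ : ∃ G : Finset (Fin m → ℝ), G = (S.erase p1).image (fun k => std k - std p1) :=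
    ⟨_, rfl⟩
  have hgen : ∀ k ∈ S, std k - std p1 ∈ Submodule.span ℝ (G : Set (Fin m → ℝ)) := by
    intro k hk
    by_cases hkp : k = p1
    · rw [hkp, sub_self]; exact Submodule.zero_mem _
    · refine Submodule.subset_span (Finset.mem_coe.2 ?_)
      rw [hGdef]
      exact Finset.mem_image_of_mem _ (Finset.mem_erase.2 ⟨hkp, hk⟩)
  have hFG : (F : Set (Fin m → ℝ)) ⊆ ↑(Submodule.span ℝ (G : Set (Fin m → ℝ))) := by
    intro b hb
    rw [Finset.mem_coe] at hb
    obtain ⟨p, q, hpq, rfl⟩ := hF b hb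
    have hp : p ∈ S := hendpts _ hb p (by rw [root_apply_fst hpq]; norm_num)
    have hq : q ∈ S := hendpts _ hb q (by rw [root_apply_snd hpq]; norm_num)
    have : std p - std q = (std p - std p1) - (std q - std p1) := by abel
    rw [this]
    exact Submodule.sub_mem _ (hgen p hp) (hgen q hq)
  have h1 : F.card = Module.finrank ℝ (Submodule.span ℝ (F : Set (Fin m → ℝ))) :=
    (finrank_span_finset_eq_card hind).symm
  have h2 : Module.finrank ℝ (Submodule.span ℝ (F : Set (Fin m → ℝ)))
      ≤ Module.finrank ℝ (Submodule.span ℝ (G : Set (Fin m → ℝ))) :=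
    Submodule.finrank_mono (Submodule.span_le.2 hFG)
  have h3 : Module.finrank ℝ (Submodule.span ℝ (G : Set (Fin m → ℝ))) ≤ G.card :=
    finrank_span_finset_le_card G
  have h4 : G.card ≤ (S.erase p1).card := by rw [hGdef]; exact Finset.card_image_le
  have h5 : (S.erase p1).card = S.card - 1 := Finset.card_erase_of_mem hk0
  have hdim : F.card ≤ S.card - 1 := by
    rw [h1, ← h5]; exact h2.trans (h3.trans h4)
  have hS1 : 1 ≤ S.card := Finset.card_pos.2 ⟨p1, hk0⟩
  exact nat_contra hcount hdim hS1

lemma key {m : ℕ} (d : ℕ) : ∀ F : Finset (Fin m → ℝ), F.card ≤ d →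
    (∀ b ∈ F, IsRootA b) →
    LinearIndependent ℝ ((↑) : F → (Fin m → ℝ)) →
    ∀ t : Fin m → ℝ, IsRootA t → t ∈ Submodule.span ℝ (F : Set (Fin m → ℝ)) →
    t ∈ Submodule.span ℤ (F : Set (Fin m → ℝ)) := by
  induction d with
  | zero =>
    intro F hcard hF hind t ht hspan
    rw [Nat.le_zero, Finset.card_eq_zero] at hcard
    subst hcard
    rw [Finset.coe_empty, Submodule.span_empty, Submodule.mem_bot] at hspan
    obtain ⟨i, j, hij, rfl⟩ := ht
    have h := congrFun hspan i
    rw [root_apply_fst hij] at h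
    norm_num at h
  | succ d IH =>
    intro F hcard hF hind t ht hspan
    by_cases hc : F.card ≤ d
    · exact IH F hc hF hind t ht hspan
    have hne : F.Nonempty := by
      rw [Finset.nonempty_iff_ne_empty]
      rintro rfl
      simp at hc
    obtain ⟨k, b0, hb0F, hb0k, huniq⟩ := exists_leaf F hne hF hind
    obtain ⟨f, -, hf⟩ := Submodule.mem_span_finset.1 hspan
    have hsubE : (↑(F.erase b0) : Set (Fin m → ℝ)) ⊆ ↑F :=
      Finset.coe_subset.2 (Finset.erase_subset _ _)
    have hcardE : (F.erase b0).card ≤ d := by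
      rw [Finset.card_erase_of_mem hb0F]
      exact Nat.sub_le_sub_right hcard 1
    have hFE : ∀ b ∈ F.erase b0, IsRootA b := fun b hb => hF b (Finset.mem_of_mem_erase hb)
    have hindE : LinearIndependent ℝ ((↑) : (F.erase b0) → (Fin m → ℝ)) := by
      have := linearIndependent_subtype_iff.2 ((linearIndependent_subtype_iff.1 hind).mono hsubE); exact this
    have hdecomp : t = f b0 • b0 + ∑ b ∈ F.erase b0, f b • b := by
      rw [← hf]
      exact (Finset.add_sum_erase F (fun b => f b • b) hb0F).symm
    have hmemE : (∑ b ∈ F.erase b0, f b • b)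
        ∈ Submodule.span ℝ (↑(F.erase b0) : Set (Fin m → ℝ)) :=
      Submodule.sum_mem _
        (fun b hb => Submodule.smul_mem _ _ (Submodule.subset_span (Finset.mem_coe.2 hb)))
    have heval : t k = f b0 * b0 k := by
      have h := congrFun hf k
      rw [Finset.sum_apply] at h
      have h2 : ∑ b ∈ F, (f b • b) k = (f b0 • b0) k :=
        Finset.sum_eq_single_of_mem b0 hb0F (fun b hb hbne => by
          have hbk : b k = 0 := by
            by_contra h'
            exact hbne (huniq b hb h')
          simp [hbk])
      rw [← h, h2, Pi.smul_apply, smul_eq_mul]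
    obtain ⟨i, j, hij, rfl⟩ := ht
    obtain ⟨p, q, hpq, rfl⟩ := hF b0 hb0F
    by_cases htk : (std i - std j) k = 0
    · have hf0 : f (std p - std q) = 0 := by
        rw [htk] at heval
        exact (mul_eq_zero.1 heval.symm).resolve_right hb0k
      have hspanE : (std i - std j)
          ∈ Submodule.span ℝ (↑(F.erase (std p - std q)) : Set (Fin m → ℝ)) := by
        rw [hdecomp, hf0, zero_smul, zero_add]
        exact hmemE
      exact Submodule.span_mono hsubE (IH _ hcardE hFE hindE _ ⟨i, j, hij, rfl⟩ hspanE)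
    · have hki : k = i ∨ k = j := root_support htk
      have hkpq : k = p ∨ k = q := root_support hb0k
      have ht'eq : (∑ b ∈ F.erase (std p - std q), f b • b)
          = (std i - std j) - f (std p - std q) • (std p - std q) := by
        rw [hdecomp]; abel
      suffices h : (f (std p - std q) = 1 ∨ f (std p - std q) = -1) ∧
          ((∑ b ∈ F.erase (std p - std q), f b • b) = 0 ∨
            IsRootA (∑ b ∈ F.erase (std p - std q), f b • b)) by
        obtain ⟨hsign, hz⟩ := h
        have ht'Z : (∑ b ∈ F.erase (std p - std q), f b • b)
            ∈ Submodule.span ℤ (↑F : Set (Fin m → ℝ)) := by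
          rcases hz with hz | hz
          · rw [hz]; exact Submodule.zero_mem _
          · exact Submodule.span_mono hsubE (IH _ hcardE hFE hindE _ hz hmemE)
        have hb0Z : f (std p - std q) • (std p - std q)
            ∈ Submodule.span ℤ (↑F : Set (Fin m → ℝ)) := by
          rcases hsign with hs | hs
          · rw [hs, one_smul]
            exact Submodule.subset_span (Finset.mem_coe.2 hb0F)
          · rw [hs, neg_one_smul]
            exact Submodule.neg_mem _ (Submodule.subset_span (Finset.mem_coe.2 hb0F))
        rw [hdecomp]
        exact Submodule.add_mem _ hb0Z ht'Z
      rcases hki with rfl | rfl <;> rcases hkpq with rfl | rfl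
      · -- k = i = p
        rw [root_apply_fst hij, root_apply_fst hpq, mul_one] at heval
        refine ⟨Or.inl heval.symm, ?_⟩
        rw [ht'eq, ← heval, one_smul]
        have he : (std k - std j) - (std k - std q) = std q - std j := by abel
        rw [he]
        by_cases hqj : q = j
        · left; rw [hqj, sub_self]
        · right; exact ⟨q, j, hqj, rfl⟩
      · -- k = i = q
        rw [root_apply_fst hij, root_apply_snd hpq] at heval
        have hs : f (std p - std k) = -1 := by linarith
        refine ⟨Or.inr hs, ?_⟩
        rw [ht'eq, hs, neg_one_smul]
        have he : (std k - std j) - -(std p - std k) = std p - std j := by abel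
        rw [he]
        by_cases hpj : p = j
        · left; rw [hpj, sub_self]
        · right; exact ⟨p, j, hpj, rfl⟩
      · -- k = j = p
        rw [root_apply_snd hij, root_apply_fst hpq, mul_one] at heval
        have hs : f (std k - std q) = -1 := by linarith
        refine ⟨Or.inr hs, ?_⟩
        rw [ht'eq, hs, neg_one_smul]
        have he : (std i - std k) - -(std k - std q) = std i - std q := by abel
        rw [he]
        by_cases hiq : i = q
        · left; rw [hiq, sub_self]
        · right; exact ⟨i, q, hiq, rfl⟩
      · -- k = j = q
        rw [root_apply_snd hij, root_apply_snd hpq] at heval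
        have hs : f (std p - std k) = 1 := by linarith
        refine ⟨Or.inl hs, ?_⟩
        rw [ht'eq, hs, one_smul]
        have he : (std i - std k) - (std p - std k) = std i - std p := by abel
        rw [he]
        by_cases hip : i = p
        · left; rw [hip, sub_self]
        · right; exact ⟨i, p, hip, rfl⟩

/-- The root system `𝔸_n = {e_i − e_j : i ≠ j}` is unimodular: every root
in the real span of a linearly independent subset `B ⊆ 𝔸_n` is an integer linear
combination of the vectors of `B`. -/
theorem rootSystemA_unimodular (n : ℕ) (hn : 1 ≤ n) (B : Set (Fin (n + 1) → ℝ))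
    (hB : B ⊆ {v : Fin (n + 1) → ℝ | ∃ i j : Fin (n + 1), i ≠ j ∧ v = std i - std j})
    (hind : LinearIndependent ℝ ((↑) : B → (Fin (n + 1) → ℝ)))
    (t : Fin (n + 1) → ℝ)
    (ht : t ∈ {v : Fin (n + 1) → ℝ | ∃ i j : Fin (n + 1), i ≠ j ∧ v = std i - std j})
    (hspan : t ∈ Submodule.span ℝ B) :
    t ∈ Submodule.span ℤ B := by
  obtain ⟨F, hFB, hFspan⟩ := Submodule.mem_span_finite_of_mem_span hspan
  have hF : ∀ b ∈ F, IsRootA b := fun b hb => hB (hFB hb)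
  have hindF : LinearIndependent ℝ ((↑) : F → (Fin (n + 1) → ℝ)) := by
    have := linearIndependent_subtype_iff.2 ((linearIndependent_subtype_iff.1 hind).mono hFB); exact this
  exact Submodule.span_mono hFB (key F.card F le_rfl hF hindF t ht hFspan)
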